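/- For any permutation σ of {1,...,n} and reals 0 < a_1 ≤ ... ≤ a_n with a_1^{a_n} ≥ e^{-1}, one has ∑_{i=1}^n a_i^{a_{n+1-i}} ≤ ∑_{i=1}^n a_i^{a_{σ(i)}} ≤ ∑_{i=1}^n a_i^{a_i}. -/

import Mathlib

open Real Finset

/-- Supermodularity of `x ^ y` under the condition `x ^ d ≥ e⁻¹`. -/
lemma super_rpow {x y c d : ℝ} (hx : 0 < x) (hxy : x ≤ y) (hc : 0 < c) (hcd : c ≤ d)
    (hCx : Real.exp (-1) ≤ x ^ d) : x ^ d + y ^ c ≤ x ^ c + y ^ d := by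
  have hd : 0 < d := hc.trans_le hcd
  -- key pointwise inequality : for t ≥ x, c * t ^ c ≤ d * t ^ d
  have key : ∀ t : ℝ, x ≤ t → c * t ^ c ≤ d * t ^ d := by
    intro t hxt
    have ht : 0 < t := hx.trans_le hxt
    have h1 : x ^ (d - c) ≤ t ^ (d - c) :=
      Real.rpow_le_rpow hx.le hxt (by linarith)
    have h2 : c / d ≤ x ^ (d - c) := by
      have e1 : (x ^ d) ^ ((d - c) / d) = x ^ (d - c) := by
        rw [← Real.rpow_mul hx.le]
        congr 1
        field_simp
      have e2 : (Real.exp (-1)) ^ ((d - c) / d) = Real.exp (-(d - c) / d) := by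
        rw [← Real.exp_one_rpow (-1), ← Real.rpow_mul (Real.exp_pos 1).le,
          Real.exp_one_rpow]
        ring_nf
      have e3 : (Real.exp (-1)) ^ ((d - c) / d) ≤ (x ^ d) ^ ((d - c) / d) :=
        Real.rpow_le_rpow (Real.exp_pos _).le hCx
          (div_nonneg (by linarith) hd.le)
      have e4 : c / d ≤ Real.exp (-(d - c) / d) := by
        have h5 : -(d - c) / d = c / d - 1 := by field_simp; ring
        rw [h5]
        have := Real.add_one_le_exp (c / d - 1)
        linarith
      rw [e2] at e3
      rw [e1] at e3
      linarith
    have h3 : c ≤ d * t ^ (d - c) := by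
      have := mul_le_mul_of_nonneg_left (h2.trans h1) hd.le
      rw [mul_div_cancel₀ _ hd.ne'] at this
      linarith
    calc c * t ^ c ≤ (d * t ^ (d - c)) * t ^ c :=
          mul_le_mul_of_nonneg_right h3 (Real.rpow_nonneg ht.le c)
      _ = d * t ^ d := by
          rw [mul_assoc, ← Real.rpow_add ht]; ring_nf
  -- the function t ↦ t ^ d - t ^ c is monotone on [x, y]
  have hmono : MonotoneOn (fun t => t ^ d - t ^ c) (Set.Icc x y) := by
    apply monotoneOn_of_deriv_nonneg (convex_Icc x y)
    · apply ContinuousOn.sub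
      · exact ContinuousOn.rpow_const continuousOn_id
          (fun t ht => Or.inl (ne_of_gt (hx.trans_le ht.1)))
      · exact ContinuousOn.rpow_const continuousOn_id
          (fun t ht => Or.inl (ne_of_gt (hx.trans_le ht.1)))
    · intro t ht
      rw [interior_Icc] at ht
      have ht0 : 0 < t := hx.trans ht.1
      exact (((Real.hasDerivAt_rpow_const (Or.inl ht0.ne')).sub
        (Real.hasDerivAt_rpow_const (Or.inl ht0.ne'))).differentiableAt).differentiableWithinAt
    · intro t ht
      rw [interior_Icc] at ht
      have ht0 : 0 < t := hx.trans ht.1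
      have hder : HasDerivAt (fun t : ℝ => t ^ d - t ^ c)
          (d * t ^ (d - 1) - c * t ^ (c - 1)) t :=
        (Real.hasDerivAt_rpow_const (Or.inl ht0.ne')).sub
          (Real.hasDerivAt_rpow_const (Or.inl ht0.ne'))
      rw [hder.deriv]
      have e1 : t ^ (d - 1) = t ^ d / t := by
        rw [Real.rpow_sub ht0, Real.rpow_one]
      have e2 : t ^ (c - 1) = t ^ c / t := by
        rw [Real.rpow_sub ht0, Real.rpow_one]
      rw [e1, e2]
      have := key t ht.1.le
      rw [sub_nonneg]
      rw [mul_div_assoc', mul_div_assoc', div_le_div_iff_of_pos_right ht0]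
      exact this
  have := hmono (Set.left_mem_Icc.mpr hxy) (Set.right_mem_Icc.mpr hxy) hxy
  simp only at this
  linarith

/-- Rearrangement inequality for supermodular kernels : identity maximizes. -/
lemma rearrange {n : ℕ} (f : Fin n → Fin n → ℝ)
    (hf : ∀ i j k l : Fin n, i ≤ j → k ≤ l → f i l + f j k ≤ f i k + f j l)
    (σ : Equiv.Perm (Fin n)) : ∑ i, f i (σ i) ≤ ∑ i, f i i := by
  generalize h : σ.support.card = m
  induction m using Nat.strong_induction_on generalizing σ with
  | _ m ih =>
  rcases Finset.eq_empty_or_nonempty σ.support with hs | hs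
  · rw [Equiv.Perm.support_eq_empty_iff] at hs
    subst hs; simp
  · set i := σ.support.max' hs with hidef
    have hi_mem : i ∈ σ.support := σ.support.max'_mem hs
    have hi : σ i ≠ i := Equiv.Perm.mem_support.mp hi_mem
    have hσi_mem : σ i ∈ σ.support := Equiv.Perm.apply_mem_support.mpr hi_mem
    have hσi_lt : σ i < i := lt_of_le_of_ne (Finset.le_max' _ _ hσi_mem) hi
    set j := σ⁻¹ i with hjdef
    have hj : σ j = i := Equiv.apply_symm_apply σ i
    have hji : j ≠ i := by
      intro h'; rw [h'] at hj; exact hi hj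
    have hj_mem : j ∈ σ.support := by
      rw [Equiv.Perm.mem_support, hj]; exact fun h' => hji h'.symm
    have hj_lt : j < i := lt_of_le_of_ne (Finset.le_max' _ _ hj_mem) hji
    set σ' := σ * Equiv.swap i j with hσ'def
    have hσ'i : σ' i = i := by
      simp [hσ'def, Equiv.swap_apply_left, hj]
    have hσ'j : σ' j = σ i := by
      simp [hσ'def, Equiv.swap_apply_right]
    have hσ'k : ∀ k, k ≠ i → k ≠ j → σ' k = σ k := by
      intro k hk1 hk2
      simp [hσ'def, Equiv.swap_apply_of_ne_of_ne hk1 hk2]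
    have hsub : σ'.support ⊆ σ.support.erase i := by
      intro k hk
      rw [Equiv.Perm.mem_support] at hk
      rcases eq_or_ne k i with rfl | hk1
      · exact absurd hσ'i hk
      rcases eq_or_ne k j with rfl | hk2
      · exact Finset.mem_erase.mpr ⟨hk1, hj_mem⟩
      · rw [hσ'k k hk1 hk2] at hk
        exact Finset.mem_erase.mpr ⟨hk1, Equiv.Perm.mem_support.mpr hk⟩
    have hcard : σ'.support.card < m := by
      calc σ'.support.card ≤ (σ.support.erase i).card := Finset.card_le_card hsub
        _ < σ.support.card := Finset.card_erase_lt_of_mem hi_mem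
        _ = m := h
    have step2 : ∑ k, f k (σ' k) ≤ ∑ k, f k k := ih _ hcard σ' rfl
    have step1 : ∑ k, f k (σ k) ≤ ∑ k, f k (σ' k) := by
      have hpair : ({i, j} : Finset (Fin n)) ⊆ Finset.univ := Finset.subset_univ _
      rw [← Finset.sum_sdiff hpair, ← Finset.sum_sdiff hpair]
      have hcongr : ∑ k ∈ Finset.univ \ {i, j}, f k (σ k)
          = ∑ k ∈ Finset.univ \ {i, j}, f k (σ' k) := by
        apply Finset.sum_congr rfl
        intro k hk
        simp only [Finset.mem_sdiff, Finset.mem_insert, Finset.mem_singleton] at hk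
        rw [hσ'k k (fun h => hk.2 (Or.inl h)) (fun h => hk.2 (Or.inr h))]
      rw [hcongr]
      have hps : ∑ k ∈ ({i, j} : Finset (Fin n)), f k (σ k)
          ≤ ∑ k ∈ ({i, j} : Finset (Fin n)), f k (σ' k) := by
        rw [Finset.sum_pair (Ne.symm hji), Finset.sum_pair (Ne.symm hji)]
        rw [hσ'i, hσ'j, hj]
        have := hf j i (σ i) i hj_lt.le hσi_lt.le
        linarith
      linarith
    linarith

theorem stmt_5 (n : ℕ) (hn : 2 ≤ n) (σ : Equiv.Perm (Fin n)) (a : Fin n → ℝ)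
    (hpos : ∀ i, 0 < a i) (hmono : Monotone a)
    (hC : a ⟨0, by omega⟩ ^ a ⟨n - 1, by omega⟩ ≥ Real.exp (-1)) :
    ∑ i : Fin n, a i ^ a (Fin.rev i) ≤ ∑ i : Fin n, a i ^ a (σ i) ∧
      ∑ i : Fin n, a i ^ a (σ i) ≤ ∑ i : Fin n, a i ^ a i := by
  have hn0 : 0 < n := by omega
  -- uniform lower bound
  have hbound : ∀ i l : Fin n, Real.exp (-1) ≤ a i ^ a l := by
    intro i l
    have h0i : a ⟨0, by omega⟩ ≤ a i := hmono (by simp [Fin.le_def])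
    have hln : a l ≤ a ⟨n - 1, by omega⟩ := by
      apply hmono
      simp only [Fin.le_def]
      omega
    by_cases h1 : 1 ≤ a ⟨0, by omega⟩
    · have : (1 : ℝ) ≤ a i ^ a l :=
        Real.one_le_rpow (h1.trans h0i) (hpos l).le
      calc Real.exp (-1) ≤ 1 := by
            rw [show (1:ℝ) = Real.exp 0 by simp]
            exact Real.exp_le_exp.mpr (by norm_num)
        _ ≤ a i ^ a l := this
    · push_neg at h1
      calc Real.exp (-1) ≤ a ⟨0, by omega⟩ ^ a ⟨n - 1, by omega⟩ := hC
        _ ≤ a ⟨0, by omega⟩ ^ a l :=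
            Real.rpow_le_rpow_of_exponent_ge (hpos _) h1.le hln
        _ ≤ a i ^ a l := Real.rpow_le_rpow (hpos _).le h0i (hpos l).le
  -- supermodularity in the needed form
  have hsup : ∀ i j k l : Fin n, i ≤ j → k ≤ l →
      a i ^ a l + a j ^ a k ≤ a i ^ a k + a j ^ a l := by
    intro i j k l hij hkl
    exact super_rpow (hpos i) (hmono hij) (hpos k) (hmono hkl) (hbound i l)
  constructor
  · -- lower bound via the kernel  -(a i ^ a (rev j))
    have := rearrange (fun i j => -(a i ^ a (Fin.rev j)))
      (by
        intro i j k l hij hkl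
        have hrev : Fin.rev l ≤ Fin.rev k := Fin.rev_le_rev.mpr hkl
        have := hsup i j (Fin.rev l) (Fin.rev k) hij hrev
        linarith)
      (Fin.revPerm * σ)
    simp only [Equiv.Perm.mul_apply, Fin.revPerm_apply, Fin.rev_rev] at this
    have h2 := neg_le_neg this
    rw [← Finset.sum_neg_distrib, ← Finset.sum_neg_distrib] at h2
    simp only [neg_neg] at h2
    exact h2
  · exact rearrange (fun i j => a i ^ a j) hsup σ
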